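/- For every integer r ≥ 2 there exists a natural number N such that every finite set X of at least N points in ℝ^2 contains r pairwise disjoint subsets X_1, …, X_r with |X_1| = |X_2| = 2 and |X_i| = 3 for all 3 ≤ i ≤ r, such that conv X_1 ∩ ⋯ ∩ conv X_r ≠ ∅. In other words, the r-tuple (1, 1, 2, …, 2) is affinely Tverberg prescribable for r and d = 2. -/

import Mathlib

open Finset

noncomputable section TvbAux

local notation "E2R" => (Fin 2 → ℝ)

namespace TvbAux

/-- cross product of two planar vectors -/
def crs (u v : E2R) : ℝ := u 0 * v 1 - u 1 * v 0

lemma mem_hull_pair_iff {a b x : E2R} :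
    x ∈ convexHull ℝ ({a, b} : Set E2R) ↔
      ∃ s t : ℝ, 0 ≤ s ∧ 0 ≤ t ∧ s + t = 1 ∧ x = s • a + t • b := by
  rw [convexHull_pair]
  constructor
  · rintro ⟨s, t, hs, ht, hst, h⟩; exact ⟨s, t, hs, ht, hst, h.symm⟩
  · rintro ⟨s, t, hs, ht, hst, h⟩; exact ⟨s, t, hs, ht, hst, h.symm⟩

lemma mem_hull_triple_iff {a b c x : E2R} :
    x ∈ convexHull ℝ ({a, b, c} : Set E2R) ↔
      ∃ α β γ : ℝ, 0 ≤ α ∧ 0 ≤ β ∧ 0 ≤ γ ∧ α + β + γ = 1 ∧ x = α • a + β • b + γ • c := by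
  constructor
  · intro hx
    rw [convexHull_insert ⟨b, Set.mem_insert _ _⟩, mem_convexJoin] at hx
    obtain ⟨a', ha', z, hz, hxz⟩ := hx
    rw [Set.mem_singleton_iff] at ha'
    subst ha'
    rw [mem_hull_pair_iff] at hz
    obtain ⟨s, t, hs, ht, hst, rfl⟩ := hz
    obtain ⟨u, w, hu, hw, huw, hx⟩ := hxz
    refine ⟨u, w * s, w * t, hu, by positivity, by positivity, by nlinarith, ?_⟩
    rw [← hx]; simp [smul_add, smul_smul]; abel
  · rintro ⟨α, β, γ, hα, hβ, hγ, hsum, rfl⟩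
    rw [convexHull_insert ⟨b, Set.mem_insert _ _⟩, mem_convexJoin]
    by_cases hbc : β + γ = 0
    · have hβ0 : β = 0 := by linarith
      have hγ0 : γ = 0 := by linarith
      refine ⟨a, rfl, b, subset_convexHull ℝ _ (Set.mem_insert _ _), 1, 0, zero_le_one, le_refl _, by ring, ?_⟩
      simp [hβ0, hγ0, show α = 1 by linarith]
    · have hbc' : 0 < β + γ := lt_of_le_of_ne (by linarith) (Ne.symm hbc)
      refine ⟨a, rfl, (β / (β + γ)) • b + (γ / (β + γ)) • c, ?_, α, β + γ, hα, le_of_lt hbc', by linarith, ?_⟩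
      · rw [mem_hull_pair_iff]
        exact ⟨_, _, by positivity, by positivity, by field_simp, rfl⟩
      · rw [smul_add, smul_smul, smul_smul]
        rw [mul_div_cancel₀ _ (ne_of_gt hbc'), mul_div_cancel₀ _ (ne_of_gt hbc')]
        abel

lemma crs_self (u : E2R) : crs u u = 0 := by simp [crs]; ring

lemma collinear_of_combo {a b c : E2R} {s t : ℝ} (hst : s + t = 1) (h : a = s • b + t • c) :
    crs (b - a) (c - a) = 0 := by
  have hb : b - a = t • (b - c) := by
    rw [h]; funext i; fin_cases i <;>
      · simp only [Pi.sub_apply, Pi.smul_apply, Pi.add_apply, smul_eq_mul]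
        linear_combination (-(b _)) * hst
  have hc : c - a = s • (c - b) := by
    rw [h]; funext i; fin_cases i <;>
      · simp only [Pi.sub_apply, Pi.smul_apply, Pi.add_apply, smul_eq_mul]
        linear_combination (-(c _)) * hst
  rw [hb, hc]
  simp [crs]; ring

lemma crs_flip (d e x : E2R) : crs (d - e) (x - e) = - crs (e - d) (x - d) := by
  simp [crs]; ring

lemma exists_smul_of_crs_eq_zero {u v : E2R} (h : crs u v = 0) (hu : u ≠ 0) :
    ∃ t : ℝ, v = t • u := by
  have h01 : u 0 ≠ 0 ∨ u 1 ≠ 0 := by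
    by_contra hc
    push_neg at hc
    exact hu (funext fun i => by fin_cases i <;> simp [hc.1, hc.2])
  rcases h01 with h0 | h1
  · refine ⟨v 0 / u 0, funext fun i => ?_⟩
    fin_cases i
    · simp [div_mul_cancel₀, h0]
    · simp only [Pi.smul_apply, smul_eq_mul]
      field_simp
      simp only [crs] at h
      simp only [Fin.mk_one, Fin.zero_eta] at *
      linarith [h]
  · refine ⟨v 1 / u 1, funext fun i => ?_⟩
    fin_cases i
    · simp only [Pi.smul_apply, smul_eq_mul]
      field_simp
      simp only [crs] at h
      simp only [Fin.mk_one, Fin.zero_eta] at *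
      linarith [h]
    · simp [div_mul_cancel₀, h1]

lemma col_between {p q z : E2R} (hcol : crs (q - p) (z - p) = 0)
    (hpq : p ≠ q) (hpz : p ≠ z) (hqz : q ≠ z) :
    ∃ u m w : E2R, m ∈ convexHull ℝ ({u, w} : Set E2R) ∧ u ≠ m ∧ u ≠ w ∧ m ≠ w ∧
      u ∈ ({p, q, z} : Set E2R) ∧ m ∈ ({p, q, z} : Set E2R) ∧ w ∈ ({p, q, z} : Set E2R) := by
  have hz : z - p ≠ 0 := sub_ne_zero.mpr (Ne.symm hpz)
  have hcol' : crs (z - p) (q - p) = 0 := by simp only [crs] at hcol ⊢; linarith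
  obtain ⟨t, ht⟩ := exists_smul_of_crs_eq_zero hcol' hz
  have hti : ∀ i, q i = p i + t * (z i - p i) := by
    intro i
    have := congrFun ht i
    simp only [Pi.sub_apply, Pi.smul_apply, smul_eq_mul] at this
    linarith
  rcases le_or_gt t 0 with h0 | h0
  · -- p is between q and z
    have h1t : (0:ℝ) < 1 - t := by linarith
    refine ⟨q, p, z, ?_, Ne.symm hpq, hqz, hpz, by simp, by simp, by simp⟩
    rw [mem_hull_pair_iff]
    refine ⟨1 / (1 - t), 1 - 1 / (1 - t), by positivity, ?_, by ring, ?_⟩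
    · rw [sub_nonneg, div_le_one h1t]; linarith
    · funext i
      simp only [Pi.add_apply, Pi.smul_apply, smul_eq_mul]
      have hqi := hti i
      field_simp
      nlinarith [hqi]
  · rcases le_or_gt t 1 with h1 | h1
    · -- q is between p and z
      refine ⟨p, q, z, ?_, hpq, hpz, hqz, by simp, by simp, by simp⟩
      rw [mem_hull_pair_iff]
      refine ⟨1 - t, t, by linarith, le_of_lt h0, by ring, ?_⟩
      funext i
      simp only [Pi.add_apply, Pi.smul_apply, smul_eq_mul]
      nlinarith [hti i]
    · -- z is between p and q
      refine ⟨p, z, q, ?_, hpz, hpq, Ne.symm hqz, by simp, by simp, by simp⟩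
      rw [mem_hull_pair_iff]
      refine ⟨1 - 1 / t, 1 / t, ?_, by positivity, by ring, ?_⟩
      · rw [sub_nonneg, div_le_one (by linarith)]; linarith
      funext i
      simp only [Pi.add_apply, Pi.smul_apply, smul_eq_mul]
      have hqi := hti i
      field_simp
      nlinarith [hqi]

lemma sign3 {x y z : ℝ} (hx : x ≠ 0) (hy : y ≠ 0) (hz : z ≠ 0) :
    0 < x * y ∨ 0 < x * z ∨ 0 < y * z := by
  rcases lt_or_gt_of_ne hx with h | h <;> rcases lt_or_gt_of_ne hy with h' | h' <;>
    rcases lt_or_gt_of_ne hz with h'' | h''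
  · exact Or.inl (mul_pos_of_neg_of_neg h h')
  · exact Or.inl (mul_pos_of_neg_of_neg h h')
  · exact Or.inr (Or.inl (mul_pos_of_neg_of_neg h h''))
  · exact Or.inr (Or.inr (mul_pos h' h''))
  · exact Or.inr (Or.inr (mul_pos_of_neg_of_neg h' h''))
  · exact Or.inr (Or.inl (mul_pos h h''))
  · exact Or.inl (mul_pos h h')
  · exact Or.inl (mul_pos h h')

lemma not_affineIndependent_four (S : Finset E2R) (h4 : S.card = 4) :
    ¬ AffineIndependent ℝ (fun x : ↥(S : Finset E2R) => (x : E2R)) := by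
  intro hi
  have hcard : Fintype.card ↥(S : Finset E2R) = 3 + 1 := by
    rw [Fintype.card_coe, h4]
  have hfr := hi.finrank_vectorSpan hcard
  have hle : Module.finrank ℝ (vectorSpan ℝ (Set.range (fun x : ↥(S : Finset E2R) => (x : E2R))))
      ≤ Module.finrank ℝ E2R := Submodule.finrank_le _
  rw [hfr, Module.finrank_fin_fun] at hle
  omega

lemma radon4F (S : Finset E2R) (h4 : S.card = 4) :
    (∃ T ⊆ S, T.card = 2 ∧ ((convexHull ℝ (T : Set E2R)) ∩ (convexHull ℝ ((S \ T : Finset E2R) : Set E2R))).Nonempty)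
    ∨ (∃ x ∈ S, x ∈ convexHull ℝ ((S.erase x : Finset E2R) : Set E2R)) := by
  classical
  obtain ⟨I, v, hv1, hv2⟩ := Convex.radon_partition (not_affineIndependent_four S h4)
  set f : ↥(S : Finset E2R) → E2R := fun x => (x : E2R) with hf
  set A : Finset E2R := Finset.image (fun x : ↥(S : Finset E2R) => (x : E2R)) I.toFinset with hA
  have hAS : A ⊆ S := by
    intro y hy
    simp only [hA, Finset.mem_image] at hy
    obtain ⟨x, _, rfl⟩ := hy
    exact x.2
  have him1 : f '' I ⊆ (A : Set E2R) := by
    rintro y ⟨x, hx, rfl⟩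
    simp only [hA, Finset.coe_image, Set.mem_image, Finset.mem_coe, Set.mem_toFinset]
    exact ⟨x, hx, rfl⟩
  have him2 : f '' Iᶜ ⊆ ((S \ A : Finset E2R) : Set E2R) := by
    rintro y ⟨x, hx, rfl⟩
    simp only [Finset.coe_sdiff, Set.mem_diff, Finset.mem_coe]
    refine ⟨x.2, ?_⟩
    intro hyA
    simp only [hA, Finset.mem_image] at hyA
    obtain ⟨x', hx', hxx⟩ := hyA
    have : x' = x := Subtype.ext hxx
    exact hx (this ▸ (Set.mem_toFinset.mp hx'))
  have hv1' : v ∈ convexHull ℝ (A : Set E2R) := convexHull_mono him1 hv1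
  have hv2' : v ∈ convexHull ℝ ((S \ A : Finset E2R) : Set E2R) := convexHull_mono him2 hv2
  have hA4 : A.card ≤ 4 := h4 ▸ Finset.card_le_card hAS
  -- A is nonempty and not all of S
  have hAne : A.Nonempty := by
    rcases Set.eq_empty_or_nonempty (f '' I) with he | hne
    · rw [he, convexHull_empty] at hv1; exact absurd hv1 (Set.notMem_empty v)
    · obtain ⟨y, hy⟩ := hne
      exact ⟨y, by
        have := him1 hy
        exact Finset.mem_coe.mp this⟩
  have hBne : (S \ A).Nonempty := by
    rcases Set.eq_empty_or_nonempty (f '' Iᶜ) with he | hne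
    · rw [he, convexHull_empty] at hv2; exact absurd hv2 (Set.notMem_empty v)
    · obtain ⟨y, hy⟩ := hne
      exact ⟨y, Finset.mem_coe.mp (him2 hy)⟩
  have hA1 : 1 ≤ A.card := Finset.card_pos.mpr hAne
  have hA3 : A.card ≤ 3 := by
    by_contra hgt
    push_neg at hgt
    have : A = S := Finset.eq_of_subset_of_card_le hAS (by omega)
    obtain ⟨y, hy⟩ := hBne
    rw [this] at hy
    simp at hy
  -- case analysis on A.card
  interval_cases hAc : A.card
  · -- card 1 : A = {x}
    obtain ⟨x, hx⟩ := Finset.card_eq_one.mp hAc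
    right
    refine ⟨x, hAS (hx ▸ Finset.mem_singleton_self x), ?_⟩
    have hvx : v = x := by
      rw [hx] at hv1'
      simpa [convexHull_singleton] using hv1'
    have : (S \ A) ⊆ S.erase x := by
      intro y hy
      rw [Finset.mem_sdiff] at hy
      rw [Finset.mem_erase]
      exact ⟨fun h => hy.2 (hx ▸ (h ▸ Finset.mem_singleton_self x)), hy.1⟩
    exact hvx ▸ (convexHull_mono (Finset.coe_subset.mpr this) hv2')
  · -- card 2
    left
    exact ⟨A, hAS, hAc, ⟨v, hv1', hv2'⟩⟩
  · -- card 3 : S \ A is a singleton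
    have hBc : (S \ A).card = 1 := by
      rw [Finset.card_sdiff_of_subset hAS, h4, hAc]
    obtain ⟨x, hx⟩ := Finset.card_eq_one.mp hBc
    right
    have hxS : x ∈ S := by
      have := hx ▸ Finset.mem_singleton_self x
      exact (Finset.mem_sdiff.mp this).1
    refine ⟨x, hxS, ?_⟩
    have hvx : v = x := by
      rw [hx] at hv2'
      simpa [convexHull_singleton] using hv2'
    have hsub : A ⊆ S.erase x := by
      intro y hy
      rw [Finset.mem_erase]
      refine ⟨?_, hAS hy⟩
      intro h
      have hxA : x ∈ A := h ▸ hy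
      have := hx ▸ Finset.mem_singleton_self x
      exact (Finset.mem_sdiff.mp this).2 hxA
    exact hvx ▸ (convexHull_mono (Finset.coe_subset.mpr hsub) hv1')

lemma E2 {a b d e : E2R} (hd : d ∈ convexHull ℝ ({a, b, e} : Set E2R))
    (hsign : 0 < crs (e - d) (a - d) * crs (e - d) (b - d)) (hde : d ≠ e) : False := by
  rw [mem_hull_triple_iff] at hd
  obtain ⟨α, β, ε, hα, hβ, hε, hsum, hcombo⟩ := hd
  have hti : ∀ i, d i = α * a i + β * b i + ε * e i := by
    intro i
    have := congrFun hcombo i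
    simpa [Pi.add_apply, Pi.smul_apply, smul_eq_mul] using this
  have hkey : α * crs (e - d) (a - d) + β * crs (e - d) (b - d) = 0 := by
    simp only [crs, Pi.sub_apply]
    have h0 := hti 0
    have h1 := hti 1
    linear_combination (e 1 - d 1) * h0 - (e 0 - d 0) * h1 +
      ((e 1 - d 1) * d 0 - (e 0 - d 0) * d 1) * hsum
  rcases (mul_pos_iff.mp hsign) with ⟨hpa, hpb⟩ | ⟨hna, hnb⟩
  · have hα0 : α = 0 := by nlinarith
    have hβ0 : β = 0 := by nlinarith
    have hε1 : ε = 1 := by linarith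
    exact hde (funext fun i => by have := hti i; rw [hα0, hβ0, hε1] at this; linarith)
  · have hα0 : α = 0 := by nlinarith
    have hβ0 : β = 0 := by nlinarith
    have hε1 : ε = 1 := by linarith
    exact hde (funext fun i => by have := hti i; rw [hα0, hβ0, hε1] at this; linarith)

lemma E1 {a b c d e : E2R}
    (hd : d ∈ convexHull ℝ ({a, b, c} : Set E2R))
    (he : e ∈ convexHull ℝ ({a, b, c} : Set E2R))
    (ha : a ∈ convexHull ℝ ({b, d, e} : Set E2R))
    (hncol : crs (b - a) (c - a) ≠ 0) (hda : d ≠ a) (hea : e ≠ a) : False := by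
  rw [mem_hull_triple_iff] at hd he ha
  obtain ⟨d₁, d₂, d₃, hd₁, hd₂, hd₃, hdsum, hdc⟩ := hd
  obtain ⟨e₁, e₂, e₃, he₁, he₂, he₃, hesum, hec⟩ := he
  obtain ⟨β, δ, ε, hβ, hδ, hε, hasum, hac⟩ := ha
  have hdi : ∀ i, d i = d₁ * a i + d₂ * b i + d₃ * c i := fun i => by
    simpa using congrFun hdc i
  have hei : ∀ i, e i = e₁ * a i + e₂ * b i + e₃ * c i := fun i => by
    simpa using congrFun hec i
  have hai : ∀ i, a i = β * b i + δ * d i + ε * e i := fun i => by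
    simpa using congrFun hac i
  set c₁ : ℝ := δ * d₁ + ε * e₁ with hc₁
  set c₂ : ℝ := β + δ * d₂ + ε * e₂ with hc₂
  set c₃ : ℝ := δ * d₃ + ε * e₃ with hc₃
  have hc₂0 : 0 ≤ c₂ := by positivity
  have hc₃0 : 0 ≤ c₃ := by positivity
  have hcsum : c₁ + c₂ + c₃ = 1 := by
    simp only [hc₁, hc₂, hc₃]
    nlinarith [hdsum, hesum, hasum]
  have hcomb : ∀ i, a i = c₁ * a i + c₂ * b i + c₃ * c i := by
    intro i
    simp only [hc₁, hc₂, hc₃]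
    nlinarith [hdi i, hei i, hai i]
  rcases lt_or_ge c₁ 1 with hlt | hge
  · -- a is a combination of b and c : collinearity contradiction
    have h1c : (0:ℝ) < 1 - c₁ := by linarith
    apply hncol
    apply collinear_of_combo (s := c₂ / (1 - c₁)) (t := c₃ / (1 - c₁))
    · field_simp; linarith
    · funext i
      simp only [Pi.add_apply, Pi.smul_apply, smul_eq_mul]
      rw [div_mul_eq_mul_div, div_mul_eq_mul_div, ← add_div, eq_comm,
        div_eq_iff (ne_of_gt h1c)]
      linear_combination -(hcomb i)
  · -- c₁ = 1, so c₂ = c₃ = 0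
    have hc₁1 : δ * d₁ + ε * e₁ = 1 := by rw [← hc₁]; linarith
    have hc₂z : β + δ * d₂ + ε * e₂ = 0 := by rw [← hc₂]; linarith
    have hc₃z : δ * d₃ + ε * e₃ = 0 := by rw [← hc₃]; linarith
    have hmδ₂ : 0 ≤ δ * d₂ := mul_nonneg hδ hd₂
    have hmε₂ : 0 ≤ ε * e₂ := mul_nonneg hε he₂
    have hmδ₃ : 0 ≤ δ * d₃ := mul_nonneg hδ hd₃
    have hmε₃ : 0 ≤ ε * e₃ := mul_nonneg hε he₃
    have hβ0 : β = 0 := by linarith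
    have hδd₂ : δ * d₂ = 0 := by linarith
    have hεe₂ : ε * e₂ = 0 := by linarith
    have hδd₃ : δ * d₃ = 0 := by linarith
    have hεe₃ : ε * e₃ = 0 := by linarith
    have hδε : δ + ε = 1 := by linarith
    have hkey : δ * (1 - d₁) + ε * (1 - e₁) = 0 := by linear_combination hδε - hc₁1
    have hmδ1 : 0 ≤ δ * (1 - d₁) := mul_nonneg hδ (by linarith)
    have hmε1 : 0 ≤ ε * (1 - e₁) := mul_nonneg hε (by linarith)
    rcases eq_or_lt_of_le hδ with hδ0 | hδpos
    · -- δ = 0, ε = 1, e = a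
      have hε1 : ε = 1 := by linarith
      rw [hε1, one_mul] at hεe₂ hεe₃
      have he₁1 : e₁ = 1 := by
        have h' : ε * (1 - e₁) = 0 := by
          have : δ * (1 - d₁) = 0 := by rw [← hδ0, zero_mul]
          linarith
        rw [hε1, one_mul] at h'
        linarith
      apply hea
      have he₂0 : e₂ = 0 := hεe₂
      have he₃0 : e₃ = 0 := hεe₃
      funext i
      have := hei i
      rw [he₁1, he₂0, he₃0] at this
      linarith
    · -- δ > 0 : d = a
      have h1d : δ * (1 - d₁) = 0 := by linarith
      have hd₁1 : d₁ = 1 := by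
        rcases mul_eq_zero.mp h1d with h | h
        · exact absurd h.symm (ne_of_lt hδpos)
        · linarith
      have hd₂0 : d₂ = 0 := by
        rcases mul_eq_zero.mp hδd₂ with h | h
        · exact absurd h.symm (ne_of_lt hδpos)
        · exact h
      have hd₃0 : d₃ = 0 := by
        rcases mul_eq_zero.mp hδd₃ with h | h
        · exact absurd h.symm (ne_of_lt hδpos)
        · exact h
      apply hda
      funext i
      have := hdi i
      rw [hd₁1, hd₂0, hd₃0] at this
      linarith

lemma left_mem_hull_pair (x y : E2R) : x ∈ convexHull ℝ ({x, y} : Set E2R) :=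
  subset_convexHull ℝ _ (Set.mem_insert _ _)

lemma kleinCore {P Q R x₁ x₂ : E2R}
    (hd' : x₁ ∈ convexHull ℝ ({P, Q, R} : Set E2R))
    (he : x₂ ∈ convexHull ℝ ({P, Q, R} : Set E2R))
    (hsign : 0 < crs (x₂ - x₁) (P - x₁) * crs (x₂ - x₁) (Q - x₁))
    (hPQ : P ≠ Q) (hx₁P : x₁ ≠ P) (hx₁Q : x₁ ≠ Q) (hx₂P : x₂ ≠ P) (hx₂Q : x₂ ≠ Q)
    (hx₁x₂ : x₁ ≠ x₂)
    (hncolPQ : crs (Q - P) (R - P) ≠ 0) (hncolQP : crs (P - Q) (R - Q) ≠ 0)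
    (hkey4 : ∃ x ∈ ({P, Q, x₁, x₂} : Finset E2R),
      x ∈ convexHull ℝ ((({P, Q, x₁, x₂} : Finset E2R).erase x : Finset E2R) : Set E2R)) :
    False := by
  classical
  obtain ⟨x, hx, hxh⟩ := hkey4
  simp only [Finset.mem_insert, Finset.mem_singleton] at hx
  rcases hx with hxe | hxe | hxe | hxe <;> rw [hxe] at hxh
  · -- x = P
    have herase : (({P, Q, x₁, x₂} : Finset E2R).erase P) = {Q, x₁, x₂} := by
      ext y
      simp only [Finset.mem_erase, Finset.mem_insert, Finset.mem_singleton]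
      constructor
      · rintro ⟨hyP, rfl | rfl | rfl | rfl⟩
        · exact absurd rfl hyP
        · exact Or.inl rfl
        · exact Or.inr (Or.inl rfl)
        · exact Or.inr (Or.inr rfl)
      · rintro (rfl | rfl | rfl)
        · exact ⟨Ne.symm hPQ, Or.inr (Or.inl rfl)⟩
        · exact ⟨hx₁P, Or.inr (Or.inr (Or.inl rfl))⟩
        · exact ⟨hx₂P, Or.inr (Or.inr (Or.inr rfl))⟩
    rw [herase] at hxh
    have hxh' : P ∈ convexHull ℝ ({Q, x₁, x₂} : Set E2R) := by
      simpa using hxh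
    exact E1 hd' he hxh' hncolPQ hx₁P hx₂P
  · -- x = Q
    have herase : (({P, Q, x₁, x₂} : Finset E2R).erase Q) = {P, x₁, x₂} := by
      ext y
      simp only [Finset.mem_erase, Finset.mem_insert, Finset.mem_singleton]
      constructor
      · rintro ⟨hyQ, rfl | rfl | rfl | rfl⟩
        · exact Or.inl rfl
        · exact absurd rfl hyQ
        · exact Or.inr (Or.inl rfl)
        · exact Or.inr (Or.inr rfl)
      · rintro (rfl | rfl | rfl)
        · exact ⟨hPQ, Or.inl rfl⟩
        · exact ⟨hx₁Q, Or.inr (Or.inr (Or.inl rfl))⟩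
        · exact ⟨hx₂Q, Or.inr (Or.inr (Or.inr rfl))⟩
    rw [herase] at hxh
    have hxh' : Q ∈ convexHull ℝ ({P, x₁, x₂} : Set E2R) := by
      simpa using hxh
    have hset : ({P, Q, R} : Set E2R) = {Q, P, R} := Set.insert_comm _ _ _
    rw [hset] at hd' he
    exact E1 hd' he hxh' hncolQP hx₁Q hx₂Q
  · -- x = x₁
    have herase : (({P, Q, x₁, x₂} : Finset E2R).erase x₁) = {P, Q, x₂} := by
      ext y
      simp only [Finset.mem_erase, Finset.mem_insert, Finset.mem_singleton]
      constructor
      · rintro ⟨hy, rfl | rfl | rfl | rfl⟩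
        · exact Or.inl rfl
        · exact Or.inr (Or.inl rfl)
        · exact absurd rfl hy
        · exact Or.inr (Or.inr rfl)
      · rintro (rfl | rfl | rfl)
        · exact ⟨Ne.symm hx₁P, Or.inl rfl⟩
        · exact ⟨Ne.symm hx₁Q, Or.inr (Or.inl rfl)⟩
        · exact ⟨Ne.symm hx₁x₂, Or.inr (Or.inr (Or.inr rfl))⟩
    rw [herase] at hxh
    have hxh' : x₁ ∈ convexHull ℝ ({P, Q, x₂} : Set E2R) := by simpa using hxh
    exact E2 hxh' hsign hx₁x₂
  · -- x = x₂
    have herase : (({P, Q, x₁, x₂} : Finset E2R).erase x₂) = {P, Q, x₁} := by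
      ext y
      simp only [Finset.mem_erase, Finset.mem_insert, Finset.mem_singleton]
      constructor
      · rintro ⟨hy, rfl | rfl | rfl | rfl⟩
        · exact Or.inl rfl
        · exact Or.inr (Or.inl rfl)
        · exact Or.inr (Or.inr rfl)
        · exact absurd rfl hy
      · rintro (rfl | rfl | rfl)
        · exact ⟨Ne.symm hx₂P, Or.inl rfl⟩
        · exact ⟨Ne.symm hx₂Q, Or.inr (Or.inl rfl)⟩
        · exact ⟨hx₁x₂, Or.inr (Or.inr (Or.inl rfl))⟩
    rw [herase] at hxh
    have hxh' : x₂ ∈ convexHull ℝ ({P, Q, x₁} : Set E2R) := by simpa using hxh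
    have hsign' : 0 < crs (x₁ - x₂) (P - x₂) * crs (x₁ - x₂) (Q - x₂) := by
      rw [show crs (x₁ - x₂) (P - x₂) = - crs (x₂ - x₁) (P - x₁) from crs_flip _ _ _,
        show crs (x₁ - x₂) (Q - x₂) = - crs (x₂ - x₁) (Q - x₁) from crs_flip _ _ _,
        neg_mul_neg]
      exact hsign
    exact E2 hxh' hsign' (Ne.symm hx₁x₂)

lemma klein (S : Finset E2R) (h5 : S.card = 5)
    (hcol : ∀ x ∈ S, ∀ y ∈ S, ∀ z ∈ S, x ≠ y → x ≠ z → y ≠ z → crs (y - x) (z - x) ≠ 0) :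
    ∃ a b c d : E2R, a ∈ S ∧ b ∈ S ∧ c ∈ S ∧ d ∈ S ∧ a ≠ b ∧ a ≠ c ∧ a ≠ d ∧ b ≠ c ∧ b ≠ d ∧
      c ≠ d ∧ ∃ v, v ∈ convexHull ℝ ({a, b} : Set E2R) ∧ v ∈ convexHull ℝ ({c, d} : Set E2R) := by
  classical
  by_contra hno
  have hkey : ∀ Q ⊆ S, Q.card = 4 → ∃ x ∈ Q,
      x ∈ convexHull ℝ ((Q.erase x : Finset E2R) : Set E2R) := by
    intro Q hQS hQ4
    rcases radon4F Q hQ4 with ⟨T, hTQ, hT2, v, hv1, hv2⟩ | h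
    · exfalso
      obtain ⟨x, y, hxy, rfl⟩ := Finset.card_eq_two.mp hT2
      have h2 : (Q \ {x, y}).card = 2 := by rw [Finset.card_sdiff_of_subset hTQ, hQ4, hT2]
      obtain ⟨z, w, hzw, hZW⟩ := Finset.card_eq_two.mp h2
      have hzin : z ∈ Q \ ({x, y} : Finset E2R) := hZW ▸ Finset.mem_insert_self z {w}
      have hwin : w ∈ Q \ ({x, y} : Finset E2R) := hZW ▸ Finset.mem_insert_of_mem (Finset.mem_singleton_self w)
      rw [Finset.mem_sdiff] at hzin hwin
      have hznot := hzin.2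
      have hwnot := hwin.2
      simp only [Finset.mem_insert, Finset.mem_singleton, not_or] at hznot hwnot
      apply hno
      refine ⟨x, y, z, w, hQS (hTQ (Finset.mem_insert_self x {y})),
        hQS (hTQ (Finset.mem_insert_of_mem (Finset.mem_singleton_self y))),
        hQS hzin.1, hQS hwin.1, hxy, Ne.symm hznot.1, Ne.symm hwnot.1,
        Ne.symm hznot.2, Ne.symm hwnot.2, hzw, v, ?_, ?_⟩
      · simpa using hv1
      · have : (convexHull ℝ ((Q \ ({x, y} : Finset E2R) : Finset E2R) : Set E2R)) =
            convexHull ℝ ({z, w} : Set E2R) := by rw [hZW]; simp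
        rw [this] at hv2
        exact hv2
    · exact h
  -- get the two interior points
  have h0 : (0 : ℕ) < 5 := by norm_num
  obtain ⟨z₀, hz₀⟩ := Finset.card_pos.mp (h5 ▸ h0)
  have hQ₁ : (S.erase z₀).card = 4 := by rw [Finset.card_erase_of_mem hz₀, h5]
  obtain ⟨x₁, hx₁Q, hx₁h⟩ := hkey (S.erase z₀) (Finset.erase_subset _ _) hQ₁
  have hx₁S : x₁ ∈ S := Finset.mem_of_mem_erase hx₁Q
  have hQ₂ : (S.erase x₁).card = 4 := by rw [Finset.card_erase_of_mem hx₁S, h5]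
  obtain ⟨x₂, hx₂Q, hx₂h⟩ := hkey (S.erase x₁) (Finset.erase_subset _ _) hQ₂
  have hx₂S : x₂ ∈ S := Finset.mem_of_mem_erase hx₂Q
  have hx₂x₁ : x₂ ≠ x₁ := (Finset.mem_erase.mp hx₂Q).1
  set T₃ : Finset E2R := (S.erase x₁).erase x₂ with hT₃def
  have hT₃c : T₃.card = 3 := by rw [hT₃def, Finset.card_erase_of_mem hx₂Q, hQ₂]
  have he : x₂ ∈ convexHull ℝ (T₃ : Set E2R) := hx₂h
  have hins : insert x₂ T₃ = S.erase x₁ := Finset.insert_erase hx₂Q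
  have hd : x₁ ∈ convexHull ℝ ((insert x₂ T₃ : Finset E2R) : Set E2R) := by
    apply convexHull_mono _ hx₁h
    rw [hins]
    intro y hy
    rcases Finset.mem_erase.mp hy with ⟨hy1, hy2⟩
    exact Finset.mem_coe.mpr (Finset.mem_erase.mpr ⟨hy1, Finset.mem_of_mem_erase hy2⟩)
  have hd' : x₁ ∈ convexHull ℝ (T₃ : Set E2R) := by
    have hsub : ((insert x₂ T₃ : Finset E2R) : Set E2R) ⊆ convexHull ℝ (T₃ : Set E2R) := by
      intro y hy
      rw [Finset.coe_insert] at hy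
      rcases hy with rfl | hy
      · exact he
      · exact subset_convexHull ℝ _ hy
    exact convexHull_min hsub (convex_convexHull ℝ _) hd
  obtain ⟨a, b, c, hab, hac, hbc, hT₃eq⟩ := Finset.card_eq_three.mp hT₃c
  have haS : a ∈ S := Finset.mem_of_mem_erase (Finset.mem_of_mem_erase (hT₃eq ▸ (Finset.mem_insert_self a {b, c})))
  have hbS : b ∈ S := Finset.mem_of_mem_erase (Finset.mem_of_mem_erase
    (hT₃eq ▸ (Finset.mem_insert_of_mem (Finset.mem_insert_self b {c}))))
  have hcS : c ∈ S := Finset.mem_of_mem_erase (Finset.mem_of_mem_erase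
    (hT₃eq ▸ (Finset.mem_insert_of_mem (Finset.mem_insert_of_mem (Finset.mem_singleton_self c)))))
  have hmemT : ∀ y, y ∈ T₃ → y ≠ x₁ ∧ y ≠ x₂ := by
    intro y hy
    rw [hT₃def, Finset.mem_erase, Finset.mem_erase] at hy
    exact ⟨hy.2.1, hy.1⟩
  have hax := hmemT a (hT₃eq ▸ (Finset.mem_insert_self a {b, c}))
  have hbx := hmemT b (hT₃eq ▸ (Finset.mem_insert_of_mem (Finset.mem_insert_self b {c})))
  have hcx := hmemT c (hT₃eq ▸ (Finset.mem_insert_of_mem (Finset.mem_insert_of_mem (Finset.mem_singleton_self c))))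
  have hT₃set : (T₃ : Set E2R) = {a, b, c} := by rw [hT₃eq]; simp
  rw [hT₃set] at he hd'
  have hx₁x₂ : x₁ ≠ x₂ := Ne.symm hx₂x₁
  have hga : crs (x₂ - x₁) (a - x₁) ≠ 0 :=
    hcol x₁ hx₁S x₂ hx₂S a haS hx₁x₂ (Ne.symm hax.1) (Ne.symm hax.2)
  have hgb : crs (x₂ - x₁) (b - x₁) ≠ 0 :=
    hcol x₁ hx₁S x₂ hx₂S b hbS hx₁x₂ (Ne.symm hbx.1) (Ne.symm hbx.2)
  have hgc : crs (x₂ - x₁) (c - x₁) ≠ 0 :=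
    hcol x₁ hx₁S x₂ hx₂S c hcS hx₁x₂ (Ne.symm hcx.1) (Ne.symm hcx.2)
  have hquad : ∀ P Q : E2R, P ∈ S → Q ∈ S → P ≠ Q → P ≠ x₁ → P ≠ x₂ → Q ≠ x₁ → Q ≠ x₂ →
      ∃ x ∈ ({P, Q, x₁, x₂} : Finset E2R),
        x ∈ convexHull ℝ ((({P, Q, x₁, x₂} : Finset E2R).erase x : Finset E2R) : Set E2R) := by
    intro P Q hPS hQS hPQ hPx₁ hPx₂ hQx₁ hQx₂
    apply hkey
    · intro y hy
      simp only [Finset.mem_insert, Finset.mem_singleton] at hy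
      rcases hy with rfl | rfl | rfl | rfl
      · exact hPS
      · exact hQS
      · exact hx₁S
      · exact hx₂S
    · rw [Finset.card_insert_of_notMem, Finset.card_insert_of_notMem,
        Finset.card_insert_of_notMem, Finset.card_singleton]
      · simp only [Finset.mem_singleton]; exact hx₁x₂
      · simp only [Finset.mem_insert, Finset.mem_singleton, not_or]; exact ⟨hQx₁, hQx₂⟩
      · simp only [Finset.mem_insert, Finset.mem_singleton, not_or]; exact ⟨hPQ, hPx₁, hPx₂⟩
  have main : ∀ P Q R : E2R, P ∈ S → Q ∈ S → R ∈ S → P ≠ Q → P ≠ R → Q ≠ R →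
      P ≠ x₁ → P ≠ x₂ → Q ≠ x₁ → Q ≠ x₂ →
      x₁ ∈ convexHull ℝ ({P, Q, R} : Set E2R) → x₂ ∈ convexHull ℝ ({P, Q, R} : Set E2R) →
      0 < crs (x₂ - x₁) (P - x₁) * crs (x₂ - x₁) (Q - x₁) → False := by
    intro P Q R hPS hQS hRS hPQ hPR hQR hPx₁ hPx₂ hQx₁ hQx₂ hdh heh hsh
    exact kleinCore hdh heh hsh hPQ (Ne.symm hPx₁) (Ne.symm hQx₁) (Ne.symm hPx₂) (Ne.symm hQx₂)
      hx₁x₂ (hcol P hPS Q hQS R hRS hPQ hPR hQR) (hcol Q hQS P hPS R hRS (Ne.symm hPQ) hQR hPR)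
      (hquad P Q hPS hQS hPQ hPx₁ hPx₂ hQx₁ hQx₂)
  rcases sign3 hga hgb hgc with hs | hs | hs
  · exact main a b c haS hbS hcS hab hac hbc hax.1 hax.2 hbx.1 hbx.2 hd' he hs
  · have hset : ({a, c, b} : Set E2R) = {a, b, c} := by
      ext y; simp only [Set.mem_insert_iff, Set.mem_singleton_iff]; tauto
    exact main a c b haS hcS hbS hac hab (Ne.symm hbc) hax.1 hax.2 hcx.1 hcx.2
      (hset ▸ hd') (hset ▸ he) hs
  · have hset : ({b, c, a} : Set E2R) = {a, b, c} := by
      ext y; simp only [Set.mem_insert_iff, Set.mem_singleton_iff]; tauto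
    exact main b c a hbS hcS haS hbc (Ne.symm hab) (Ne.symm hac) hbx.1 hbx.2 hcx.1 hcx.2
      (hset ▸ hd') (hset ▸ he) hs

lemma five_point (S : Finset E2R) (h5 : S.card = 5) :
    ∃ a b c d : E2R, a ∈ S ∧ b ∈ S ∧ c ∈ S ∧ d ∈ S ∧ a ≠ b ∧ a ≠ c ∧ a ≠ d ∧ b ≠ c ∧ b ≠ d ∧
      c ≠ d ∧ ∃ v, v ∈ convexHull ℝ ({a, b} : Set E2R) ∧ v ∈ convexHull ℝ ({c, d} : Set E2R) := by
  classical
  by_cases hcol : ∀ x ∈ S, ∀ y ∈ S, ∀ z ∈ S, x ≠ y → x ≠ z → y ≠ z → crs (y - x) (z - x) ≠ 0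
  · exact klein S h5 hcol
  · push_neg at hcol
    obtain ⟨x, hxS, y, hyS, z, hzS, hxy, hxz, hyz, hc⟩ := hcol
    obtain ⟨u, m, w, hm, hum, huw, hmw, hu3, hm3, hw3⟩ := col_between hc hxy hxz hyz
    have hmemS : ∀ t : E2R, t ∈ ({x, y, z} : Set E2R) → t ∈ S := by
      intro t ht
      rcases ht with rfl | rfl | rfl
      · exact hxS
      · exact hyS
      · exact hzS
    have huS := hmemS u hu3
    have hmS := hmemS m hm3
    have hwS := hmemS w hw3
    -- pick a fourth point distinct from u, m, w
    have hcard : 2 ≤ (((S.erase u).erase m).erase w).card := by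
      have h1 : (S.erase u).card = 4 := by rw [Finset.card_erase_of_mem huS, h5]
      have h2 : ((S.erase u).erase m).card = 3 := by
        rw [Finset.card_erase_of_mem (Finset.mem_erase.mpr ⟨Ne.symm hum, hmS⟩), h1]
      have h3 : w ∈ (S.erase u).erase m :=
        Finset.mem_erase.mpr ⟨Ne.symm hmw, Finset.mem_erase.mpr ⟨Ne.symm huw, hwS⟩⟩
      rw [Finset.card_erase_of_mem h3, h2]
    obtain ⟨z₄, hz₄⟩ := Finset.card_pos.mp (by omega : 0 < (((S.erase u).erase m).erase w).card)
    rw [Finset.mem_erase, Finset.mem_erase, Finset.mem_erase] at hz₄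
    obtain ⟨hz₄w, hz₄m, hz₄u, hz₄S⟩ := hz₄
    refine ⟨u, w, m, z₄, huS, hwS, hmS, hz₄S, huw, hum, Ne.symm hz₄u, Ne.symm hmw,
      Ne.symm hz₄w, Ne.symm hz₄m, m, hm, left_mem_hull_pair m z₄⟩

/-- Greedy matching: from a set of pairs over a ground set `V`, extract a large
vertex-disjoint subfamily. -/
lemma matching {α : Type*} [DecidableEq α] (V : Finset α) :
    ∀ n (P : Finset (α × α)), P.card = n → (∀ e ∈ P, e.1 ∈ V ∧ e.2 ∈ V) →
    ∃ M ⊆ P, (∀ e ∈ M, ∀ f ∈ M, e ≠ f → e.1 ≠ f.1 ∧ e.1 ≠ f.2 ∧ e.2 ≠ f.1 ∧ e.2 ≠ f.2) ∧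
      P.card ≤ M.card * (4 * V.card + 1) := by
  intro n
  induction n using Nat.strong_induction_on with
  | _ n ih =>
    intro P hPn hPV
    rcases P.eq_empty_or_nonempty with rfl | ⟨e, he⟩
    · exact ⟨∅, Finset.empty_subset _, by simp, by simp⟩
    · set P' := P.filter (fun x => x.1 ≠ e.1 ∧ x.1 ≠ e.2 ∧ x.2 ≠ e.1 ∧ x.2 ≠ e.2) with hP'
      have heP' : e ∉ P' := by simp [hP']
      have hP'ss : P' ⊂ P :=
        ⟨Finset.filter_subset _ _, fun hsub => heP' (hsub he)⟩
      have hlt : P'.card < n := hPn ▸ Finset.card_lt_card hP'ss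
      obtain ⟨M', hM'P', hM'd, hM'c⟩ := ih P'.card hlt P' rfl
        (fun f hf => hPV f (Finset.filter_subset _ _ hf))
      have heM' : e ∉ M' := fun h => heP' (hM'P' h)
      refine ⟨insert e M', ?_, ?_, ?_⟩
      · exact Finset.insert_subset he (hM'P'.trans (Finset.filter_subset _ _))
      · intro f hf g hg hfg
        rcases Finset.mem_insert.mp hf with rfl | hf' <;>
          rcases Finset.mem_insert.mp hg with rfl | hg'
        · exact absurd rfl hfg
        · have := (Finset.mem_filter.mp (hM'P' hg')).2
          exact ⟨Ne.symm this.1, Ne.symm this.2.2.1, Ne.symm this.2.1, Ne.symm this.2.2.2⟩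
        · exact (Finset.mem_filter.mp (hM'P' hf')).2
        · exact hM'd f hf' g hg' hfg
      · -- cardinality bound
        have hsplit : (P \ P').card + P'.card = P.card :=
          Finset.card_sdiff_add_card_eq_card (Finset.filter_subset _ _)
        have hcover : P \ P' ⊆ ((P.filter (fun x => x.1 = e.1)) ∪ (P.filter (fun x => x.1 = e.2)))
            ∪ ((P.filter (fun x => x.2 = e.1)) ∪ (P.filter (fun x => x.2 = e.2))) := by
          intro x hx
          rw [Finset.mem_sdiff] at hx
          obtain ⟨hxP, hxP'⟩ := hx
          simp only [hP', Finset.mem_filter, not_and] at hxP'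
          simp only [Finset.mem_union, Finset.mem_filter]
          by_cases h1 : x.1 = e.1
          · exact Or.inl (Or.inl ⟨hxP, h1⟩)
          by_cases h2 : x.1 = e.2
          · exact Or.inl (Or.inr ⟨hxP, h2⟩)
          by_cases h3 : x.2 = e.1
          · exact Or.inr (Or.inl ⟨hxP, h3⟩)
          by_cases h4 : x.2 = e.2
          · exact Or.inr (Or.inr ⟨hxP, h4⟩)
          · exact absurd h4 (hxP' hxP h1 h2 h3)
        have hf1 : ∀ (c : α), (P.filter (fun x => x.1 = c)).card ≤ V.card := by
          intro c
          apply Finset.card_le_card_of_injOn (fun x => x.2)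
          · intro x hx
            exact (hPV x (Finset.mem_filter.mp hx).1).2
          · intro x hx y hy hxy
            have hx' := (Finset.mem_filter.mp hx).2
            have hy' := (Finset.mem_filter.mp hy).2
            exact Prod.ext (hx'.trans hy'.symm) hxy
        have hf2 : ∀ (c : α), (P.filter (fun x => x.2 = c)).card ≤ V.card := by
          intro c
          apply Finset.card_le_card_of_injOn (fun x => x.1)
          · intro x hx
            exact (hPV x (Finset.mem_filter.mp hx).1).1
          · intro x hx y hy hxy
            have hx' := (Finset.mem_filter.mp hx).2
            have hy' := (Finset.mem_filter.mp hy).2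
            exact Prod.ext hxy (hx'.trans hy'.symm)
        have hsd : (P \ P').card ≤ 4 * V.card := by
          calc (P \ P').card ≤ _ := Finset.card_le_card hcover
          _ ≤ ((P.filter (fun x => x.1 = e.1)) ∪ (P.filter (fun x => x.1 = e.2))).card
              + ((P.filter (fun x => x.2 = e.1)) ∪ (P.filter (fun x => x.2 = e.2))).card :=
            Finset.card_union_le _ _
          _ ≤ ((P.filter (fun x => x.1 = e.1)).card + (P.filter (fun x => x.1 = e.2)).card)
              + ((P.filter (fun x => x.2 = e.1)).card + (P.filter (fun x => x.2 = e.2)).card) :=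
            Nat.add_le_add (Finset.card_union_le _ _) (Finset.card_union_le _ _)
          _ ≤ (V.card + V.card) + (V.card + V.card) :=
            Nat.add_le_add (Nat.add_le_add (hf1 _) (hf1 _)) (Nat.add_le_add (hf2 _) (hf2 _))
          _ = 4 * V.card := by ring
        have hMc : (insert e M').card = M'.card + 1 := Finset.card_insert_of_notMem heM'
        calc P.card = (P \ P').card + P'.card := hsplit.symm
        _ ≤ 4 * V.card + M'.card * (4 * V.card + 1) := Nat.add_le_add hsd hM'c
        _ ≤ (M'.card + 1) * (4 * V.card + 1) := by ring_nf; omega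
        _ = (insert e M').card * (4 * V.card + 1) := by rw [hMc]

/-- Median selection. -/
lemma median {α : Type*} [DecidableEq α] (f : α → ℝ) :
    ∀ (k : ℕ) (s : Finset α), s.card = 2 * k + 1 →
    ∃ m ∈ s, ∃ L R : Finset α, L ⊆ s ∧ R ⊆ s ∧ L.card = k ∧ R.card = k ∧ Disjoint L R ∧
      m ∉ L ∧ m ∉ R ∧ (∀ x ∈ L, f x ≤ f m) ∧ (∀ x ∈ R, f m ≤ f x) := by
  intro k
  induction k with
  | zero =>
    intro s hs
    obtain ⟨m, hm⟩ := Finset.card_eq_one.mp (by simpa using hs)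
    exact ⟨m, hm ▸ Finset.mem_singleton_self m, ∅, ∅, Finset.empty_subset _,
      Finset.empty_subset _, rfl, rfl, Finset.disjoint_empty_left _,
      Finset.notMem_empty _, Finset.notMem_empty _, by simp, by simp⟩
  | succ k ihk =>
    intro s hs
    have hne : s.Nonempty := Finset.card_pos.mp (by omega)
    obtain ⟨a, haS, hamin⟩ := s.exists_min_image f hne
    have hea : (s.erase a).card = 2 * k + 2 := by rw [Finset.card_erase_of_mem haS]; omega
    have hne2 : (s.erase a).Nonempty := Finset.card_pos.mp (by omega)
    obtain ⟨b, hbE, hbmax⟩ := (s.erase a).exists_max_image f hne2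
    have hba : b ≠ a := (Finset.mem_erase.mp hbE).1
    have hbS : b ∈ s := Finset.mem_of_mem_erase hbE
    set s' := (s.erase a).erase b with hs'
    have hs'c : s'.card = 2 * k + 1 := by
      rw [hs', Finset.card_erase_of_mem hbE]; omega
    obtain ⟨m, hms', L, R, hLs, hRs, hLc, hRc, hLR, hmL, hmR, hLle, hRle⟩ := ihk s' hs'c
    have hs'sub : s' ⊆ s := (Finset.erase_subset _ _).trans (Finset.erase_subset _ _)
    have has' : a ∉ s' := by
      rw [hs']
      intro h
      exact (Finset.mem_erase.mp (Finset.mem_of_mem_erase h)).1 rfl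
    have hbs' : b ∉ s' := fun h => (Finset.mem_erase.mp h).1 rfl
    have haL : a ∉ L := fun h => has' (hLs h)
    have hbR : b ∉ R := fun h => hbs' (hRs h)
    have hms : m ∈ s := hs'sub hms'
    refine ⟨m, hms, insert a L, insert b R, ?_, ?_, ?_, ?_, ?_, ?_, ?_, ?_, ?_⟩
    · exact Finset.insert_subset haS (hLs.trans hs'sub)
    · exact Finset.insert_subset hbS (hRs.trans hs'sub)
    · rw [Finset.card_insert_of_notMem haL, hLc]
    · rw [Finset.card_insert_of_notMem hbR, hRc]
    · rw [Finset.disjoint_left]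
      intro x hx hx'
      rcases Finset.mem_insert.mp hx with rfl | hxL
      · rcases Finset.mem_insert.mp hx' with h | hxR
        · exact hba h.symm
        · exact has' (hRs hxR)
      · rcases Finset.mem_insert.mp hx' with rfl | hxR
        · exact hbs' (hLs hxL)
        · exact (Finset.disjoint_left.mp hLR hxL) hxR
    · intro h
      rcases Finset.mem_insert.mp h with rfl | h'
      · exact has' hms'
      · exact hmL h'
    · intro h
      rcases Finset.mem_insert.mp h with rfl | h'
      · exact hbs' hms'
      · exact hmR h'
    · intro x hx
      rcases Finset.mem_insert.mp hx with rfl | hxL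
      · exact hamin m hms
      · exact hLle x hxL
    · intro x hx
      rcases Finset.mem_insert.mp hx with rfl | hxR
      · exact hbmax m (Finset.mem_erase.mpr ⟨fun h => has' (h ▸ hms'), hms⟩)
      · exact hRle x hxR

/-- Carathéodory in the plane : cut down to three points. -/
lemma caratheodory3 (Qd : Finset E2R) (v : E2R) (hv : v ∈ convexHull ℝ (Qd : Set E2R))
    (h3 : 3 ≤ Qd.card) : ∃ T ⊆ Qd, T.card = 3 ∧ v ∈ convexHull ℝ (T : Set E2R) := by
  classical
  rw [convexHull_eq_union] at hv
  simp only [Set.mem_iUnion] at hv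
  obtain ⟨t, hts, haff, hvt⟩ := hv
  have htQ : t ⊆ Qd := Finset.coe_subset.mp hts
  have hcard : t.card ≤ 3 := by
    have h1 := haff.card_le_finrank_succ
    rw [Fintype.card_coe] at h1
    have h2 : Module.finrank ℝ (vectorSpan ℝ (Set.range (Subtype.val : ↥(t : Finset E2R) → E2R)))
        ≤ Module.finrank ℝ E2R := Submodule.finrank_le _
    rw [Module.finrank_fin_fun] at h2
    omega
  obtain ⟨T, htT, hTQ, hTcard⟩ :=
    Finset.exists_subsuperset_card_eq htQ (n := 3) (by omega) (by omega)
  exact ⟨T, hTQ, by omega, convexHull_mono (Finset.coe_subset.mpr htT) hvt⟩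

/-- The arithmetic estimate. -/
lemma arith (r : ℕ) (hr : 2 ≤ r) :
    (57600 * (r + 1)) * (57600 * (r + 1)) *
      ((57600 * (r + 1)) * ((2 * r + 1) * (4 * (57600 * (r + 1)) + 1)))
      ≤ (57600 * (r + 1)).choose 5 := by
  set K := 57600 * (r + 1) with hK
  have hK8 : 8 ≤ K := by omega
  have hKr : 57600 * r ≤ K := by omega
  have h1 : K * K * (K * ((2 * r + 1) * (4 * K + 1))) ≤ 15 * r * K ^ 4 := by
    have h2r : 2 * r + 1 ≤ 3 * r := by omega
    have h4K : 4 * K + 1 ≤ 5 * K := by omega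
    calc K * K * (K * ((2 * r + 1) * (4 * K + 1)))
        ≤ K * K * (K * ((3 * r) * (5 * K))) := by
          apply Nat.mul_le_mul_left
          apply Nat.mul_le_mul_left
          exact Nat.mul_le_mul h2r h4K
      _ = 15 * r * K ^ 4 := by ring
  have h2 : 120 * (15 * r * K ^ 4) ≤ (K - 4) ^ 5 := by
    have ha : 32 * (120 * (15 * r * K ^ 4)) ≤ K ^ 5 := by
      calc 32 * (120 * (15 * r * K ^ 4)) = (57600 * r) * K ^ 4 := by ring
        _ ≤ K * K ^ 4 := Nat.mul_le_mul_right _ hKr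
        _ = K ^ 5 := by ring
    have hb : K ≤ 2 * (K - 4) := by clear_value K; clear ha h1; omega
    have hc : K ^ 5 ≤ 32 * (K - 4) ^ 5 := by
      calc K ^ 5 ≤ (2 * (K - 4)) ^ 5 := Nat.pow_le_pow_left hb 5
        _ = 32 * (K - 4) ^ 5 := by ring
    have := ha.trans hc
    omega
  have h3 : (K - 4) ^ 5 ≤ K.descFactorial 5 := by
    have e1 : K.descFactorial 5 = (K - 4) * ((K - 3) * ((K - 2) * ((K - 1) * (K * 1)))) := by
      simp [Nat.descFactorial]
    rw [e1]
    have m4 : K - 4 ≤ K - 4 := le_refl _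
    have m3 : K - 4 ≤ K - 3 := by omega
    have m2 : K - 4 ≤ K - 2 := by omega
    have m1 : K - 4 ≤ K - 1 := by omega
    have m0 : K - 4 ≤ K * 1 := by omega
    calc (K - 4) ^ 5 = (K - 4) * ((K - 4) * ((K - 4) * ((K - 4) * (K - 4)))) := by ring
      _ ≤ (K - 4) * ((K - 3) * ((K - 2) * ((K - 1) * (K * 1)))) := by
        apply Nat.mul_le_mul_left
        apply Nat.mul_le_mul m3
        apply Nat.mul_le_mul m2
        exact Nat.mul_le_mul m1 m0
  have h4 : K.descFactorial 5 = 120 * K.choose 5 := by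
    rw [Nat.descFactorial_eq_factorial_mul_choose]
    norm_num [Nat.factorial]
  have : 120 * (K * K * (K * ((2 * r + 1) * (4 * K + 1)))) ≤ 120 * K.choose 5 := by
    calc 120 * (K * K * (K * ((2 * r + 1) * (4 * K + 1))))
        ≤ 120 * (15 * r * K ^ 4) := Nat.mul_le_mul_left _ h1
      _ ≤ (K - 4) ^ 5 := h2
      _ ≤ K.descFactorial 5 := h3
      _ = 120 * K.choose 5 := h4
  exact Nat.le_of_mul_le_mul_left this (by norm_num)

/-- A "good configuration" in a finite set: two disjoint pairs whose segments meet. -/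
def GoodCfg (S : Finset E2R) (z : (E2R × E2R) × (E2R × E2R)) : Prop :=
  z.1.1 ∈ S ∧ z.1.2 ∈ S ∧ z.2.1 ∈ S ∧ z.2.2 ∈ S ∧
  z.1.1 ≠ z.1.2 ∧ z.1.1 ≠ z.2.1 ∧ z.1.1 ≠ z.2.2 ∧ z.1.2 ≠ z.2.1 ∧ z.1.2 ≠ z.2.2 ∧
  z.2.1 ≠ z.2.2 ∧
  ∃ v, v ∈ convexHull ℝ ({z.1.1, z.1.2} : Set E2R) ∧
    v ∈ convexHull ℝ ({z.2.1, z.2.2} : Set E2R)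

lemma exists_goodCfg (S : Finset E2R) (h5 : S.card = 5) : ∃ z, GoodCfg S z := by
  obtain ⟨a, b, c, d, ha, hb, hc, hd, hab, hac, had, hbc, hbd, hcd, v, hv1, hv2⟩ :=
    five_point S h5
  exact ⟨((a, b), (c, d)), ha, hb, hc, hd, hab, hac, had, hbc, hbd, hcd, v, hv1, hv2⟩

open Classical in
noncomputable def cfg (S : Finset E2R) : (E2R × E2R) × (E2R × E2R) :=
  if h : ∃ z, GoodCfg S z then h.choose else default

lemma cfg_spec (S : Finset E2R) (h5 : S.card = 5) : GoodCfg S (cfg S) := by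
  rw [cfg, dif_pos (exists_goodCfg S h5)]
  exact (exists_goodCfg S h5).choose_spec

/-- Main combinatorial step: a far-reaching segment with many disjoint crossing pairs. -/
lemma exists_segment (r : ℕ) (hr : 2 ≤ r) (X : Finset E2R)
    (hX : 57600 * (r + 1) ≤ X.card) :
    ∃ p q : E2R, p ∈ X ∧ q ∈ X ∧ p ≠ q ∧
    ∃ M : Finset (E2R × E2R), M.card = 2 * r - 3 ∧
      (∀ e ∈ M, e.1 ∈ X ∧ e.2 ∈ X ∧ e.1 ≠ e.2 ∧ e.1 ≠ p ∧ e.1 ≠ q ∧ e.2 ≠ p ∧ e.2 ≠ q ∧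
        ∃ v, v ∈ convexHull ℝ ({e.1, e.2} : Set E2R) ∧
          v ∈ convexHull ℝ ({p, q} : Set E2R)) ∧
      (∀ e ∈ M, ∀ f ∈ M, e ≠ f → e.1 ≠ f.1 ∧ e.1 ≠ f.2 ∧ e.2 ≠ f.1 ∧ e.2 ≠ f.2) := by
  classical
  set K := 57600 * (r + 1) with hKdef
  obtain ⟨X', hX'X, hX'c⟩ := Finset.exists_subset_card_eq hX
  set 𝒮 := X'.powersetCard 5 with h𝒮
  have h𝒮card : 𝒮.card = K.choose 5 := by
    rw [h𝒮, Finset.card_powersetCard, hX'c]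
  have h𝒮mem : ∀ S ∈ 𝒮, S ⊆ X' ∧ S.card = 5 := by
    intro S hS
    exact Finset.mem_powersetCard.mp hS
  -- the pigeonhole on the first pair of the configuration
  have hmaps : ∀ S ∈ 𝒮, (cfg S).1 ∈ X' ×ˢ X' := by
    intro S hS
    obtain ⟨hsub, h5⟩ := h𝒮mem S hS
    have hQ := cfg_spec S h5
    exact Finset.mem_product.mpr ⟨hsub hQ.1, hsub hQ.2.1⟩
  have hX'ne : X'.Nonempty := Finset.card_pos.mp (by omega)
  have htne : (X' ×ˢ X').Nonempty := hX'ne.product hX'ne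
  have harith : (X' ×ˢ X').card * (K * ((2 * r + 1) * (4 * K + 1))) ≤ 𝒮.card := by
    rw [Finset.card_product, hX'c, h𝒮card]
    exact arith r hr
  obtain ⟨pq, hpqt, hfib⟩ :=
    Finset.exists_le_card_fiber_of_mul_le_card_of_maps_to hmaps htne harith
  set 𝒮₁ := 𝒮.filter (fun S => (cfg S).1 = pq) with h𝒮₁
  set P₀ := 𝒮₁.image (fun S => (cfg S).2) with hP₀
  -- fibers of the second projection are small
  have hfiber : ∀ uw ∈ P₀, (𝒮₁.filter (fun S => (cfg S).2 = uw)).card ≤ K := by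
    intro uw huw
    set quad : Finset E2R := {pq.1, pq.2, uw.1, uw.2} with hquad
    have hquadTo : ∀ S ∈ 𝒮₁.filter (fun S => (cfg S).2 = uw), quad ⊆ S ∧ S.card = 5 := by
      intro S hS
      rw [Finset.mem_filter] at hS
      obtain ⟨hS1, hSuw⟩ := hS
      rw [h𝒮₁, Finset.mem_filter] at hS1
      obtain ⟨hS𝒮, hSpq⟩ := hS1
      obtain ⟨hsub, h5⟩ := h𝒮mem S hS𝒮
      have hQ := cfg_spec S h5
      rw [show cfg S = (pq, uw) from Prod.ext hSpq hSuw] at hQ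
      refine ⟨?_, h5⟩
      intro y hy
      rw [hquad] at hy
      simp only [Finset.mem_insert, Finset.mem_singleton] at hy
      rcases hy with rfl | rfl | rfl | rfl
      · exact hQ.1
      · exact hQ.2.1
      · exact hQ.2.2.1
      · exact hQ.2.2.2.1
    have hquad4 : quad.card ≤ 4 := by
      rw [hquad]
      apply le_trans (Finset.card_insert_le _ _)
      apply Nat.succ_le_succ
      apply le_trans (Finset.card_insert_le _ _)
      apply Nat.succ_le_succ
      apply le_trans (Finset.card_insert_le _ _)
      simp
    calc (𝒮₁.filter (fun S => (cfg S).2 = uw)).card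
        ≤ (X'.powersetCard 1).card := by
          apply Finset.card_le_card_of_injOn (fun S => S \ quad)
          · intro S hS
            obtain ⟨hquadS, h5⟩ := hquadTo S hS
            rw [Finset.mem_coe, Finset.mem_powersetCard]
            constructor
            · intro y hy
              have hS1 := (Finset.mem_filter.mp hS).1
              rw [h𝒮₁, Finset.mem_filter] at hS1
              exact (h𝒮mem S hS1.1).1 (Finset.mem_sdiff.mp hy).1
            · have hq4 : quad.card = 4 := by
                by_contra hne
                have : quad.card < 4 := lt_of_le_of_ne hquad4 hne
                have h1 : S.card ≤ 5 := le_of_eq h5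
                -- quad has exactly 4 elements since its members are distinct
                have hS1 := (Finset.mem_filter.mp hS).1
                rw [h𝒮₁, Finset.mem_filter] at hS1
                obtain ⟨hS𝒮, hSpq⟩ := hS1
                have hQ := cfg_spec S (h𝒮mem S hS𝒮).2
                rw [show cfg S = (pq, uw) from Prod.ext hSpq (Finset.mem_filter.mp hS).2] at hQ
                obtain ⟨_, _, _, _, h12, h13, h14, h23, h24, h34, _⟩ := hQ
                have : quad.card = 4 := by
                  rw [hquad]
                  rw [Finset.card_insert_of_notMem, Finset.card_insert_of_notMem,
                    Finset.card_insert_of_notMem, Finset.card_singleton]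
                  · simp only [Finset.mem_singleton]; exact h34
                  · simp only [Finset.mem_insert, Finset.mem_singleton, not_or]
                    exact ⟨h23, h24⟩
                  · simp only [Finset.mem_insert, Finset.mem_singleton, not_or]
                    exact ⟨h12, h13, h14⟩
                omega
              rw [Finset.card_sdiff_of_subset (hquadTo S hS).1, h5, hq4]
          · intro S hS S' hS' hEq
            dsimp only at hEq
            have h1 := (hquadTo S (Finset.mem_coe.mp hS)).1
            have h2 := (hquadTo S' (Finset.mem_coe.mp hS')).1
            have e1 : S = (S \ quad) ∪ quad := by
              rw [Finset.sdiff_union_of_subset h1]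
            have e2 : S' = (S' \ quad) ∪ quad := by
              rw [Finset.sdiff_union_of_subset h2]
            rw [e1, e2, hEq]
      _ = K := by rw [Finset.card_powersetCard, hX'c, Nat.choose_one_right]
  have himage : 𝒮₁.card ≤ K * P₀.card := by
    rw [hP₀]
    exact Finset.card_le_mul_card_image _ K hfiber
  have hP₀card : (2 * r + 1) * (4 * K + 1) ≤ P₀.card := by
    have h1 : K * ((2 * r + 1) * (4 * K + 1)) ≤ K * P₀.card := le_trans hfib himage
    have hKpos : 0 < K := by omega
    exact Nat.le_of_mul_le_mul_left h1 hKpos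
  -- properties of the members of P₀
  have hP₀mem : ∀ uw ∈ P₀, uw.1 ∈ X' ∧ uw.2 ∈ X' ∧ uw.1 ≠ uw.2 ∧ uw.1 ≠ pq.1 ∧ uw.1 ≠ pq.2 ∧
      uw.2 ≠ pq.1 ∧ uw.2 ≠ pq.2 ∧
      ∃ v, v ∈ convexHull ℝ ({uw.1, uw.2} : Set E2R) ∧
        v ∈ convexHull ℝ ({pq.1, pq.2} : Set E2R) := by
    intro uw huw
    rw [hP₀, Finset.mem_image] at huw
    obtain ⟨S, hS, hSuw⟩ := huw
    rw [h𝒮₁, Finset.mem_filter] at hS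
    obtain ⟨hS𝒮, hSpq⟩ := hS
    obtain ⟨hsub, h5⟩ := h𝒮mem S hS𝒮
    have hQ := cfg_spec S h5
    rw [show cfg S = (pq, uw) from Prod.ext hSpq hSuw] at hQ
    obtain ⟨h1, h2, h3, h4, h12, h13, h14, h23, h24, h34, v, hv1, hv2⟩ := hQ
    exact ⟨hsub h3, hsub h4, h34, Ne.symm h13, Ne.symm h23, Ne.symm h14, Ne.symm h24, v, hv2, hv1⟩
  -- p ≠ q
  have hpq_ne : pq.1 ≠ pq.2 ∧ pq.1 ∈ X' ∧ pq.2 ∈ X' := by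
    have h𝒮₁ne : 𝒮₁.Nonempty := by
      apply Finset.card_pos.mp
      have : 0 < K * ((2 * r + 1) * (4 * K + 1)) := by positivity
      omega
    obtain ⟨S, hS⟩ := h𝒮₁ne
    rw [h𝒮₁, Finset.mem_filter] at hS
    obtain ⟨hS𝒮, hSpq⟩ := hS
    obtain ⟨hsub, h5⟩ := h𝒮mem S hS𝒮
    have hQ := cfg_spec S h5
    rw [show cfg S = (pq, (cfg S).2) from Prod.ext hSpq rfl] at hQ
    exact ⟨hQ.2.2.2.2.1, hsub hQ.1, hsub hQ.2.1⟩
  -- extract the matching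
  obtain ⟨M₀, hM₀P₀, hM₀disj, hM₀card⟩ := matching X' P₀.card P₀ rfl
    (fun e he => ⟨(hP₀mem e he).1, (hP₀mem e he).2.1⟩)
  have hM₀big : 2 * r + 1 ≤ M₀.card := by
    have h1 : (2 * r + 1) * (4 * K + 1) ≤ M₀.card * (4 * K + 1) := by
      calc (2 * r + 1) * (4 * K + 1) ≤ P₀.card := hP₀card
        _ ≤ M₀.card * (4 * X'.card + 1) := hM₀card
        _ = M₀.card * (4 * K + 1) := by rw [hX'c]
    exact Nat.le_of_mul_le_mul_right h1 (by omega)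
  obtain ⟨M, hMM₀, hMcard⟩ := Finset.exists_subset_card_eq
    (show 2 * r - 3 ≤ M₀.card by omega)
  refine ⟨pq.1, pq.2, hX'X hpq_ne.2.1, hX'X hpq_ne.2.2, hpq_ne.1, M, hMcard, ?_, ?_⟩
  · intro e he
    have h := hP₀mem e (hM₀P₀ (hMM₀ he))
    exact ⟨hX'X h.1, hX'X h.2.1, h.2.2.1, h.2.2.2.1, h.2.2.2.2.1, h.2.2.2.2.2.1,
      h.2.2.2.2.2.2.1, h.2.2.2.2.2.2.2⟩
  · intro e he f hf hef
    exact hM₀disj e (hMM₀ he) f (hMM₀ hf) hef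

end TvbAux
end TvbAux

open TvbAux in
/-- The `r`-tuple `(1, 1, 2, …, 2)` is affinely Tverberg prescribable for `r` and `d = 2`:
there is an `N` such that every finite set `X` of at least `N` points in `ℝ²` contains
`r` pairwise disjoint subsets of sizes `2, 2, 3, …, 3` whose convex hulls share a point. -/
theorem affinely_prescribable_one_one_twos (r : ℕ) (hr : 2 ≤ r) :
    ∃ N : ℕ, ∀ X : Finset (Fin 2 → ℝ), N ≤ X.card →
      ∃ Y : Fin r → Finset (Fin 2 → ℝ),
        (∀ i, Y i ⊆ X) ∧
        (Pairwise fun i j => Disjoint (Y i) (Y j)) ∧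
        (∀ i : Fin r, (Y i).card = if (i : ℕ) < 2 then 2 else 3) ∧
        (⋂ i, convexHull ℝ ((Y i : Set (Fin 2 → ℝ)))).Nonempty := by
  classical
  refine ⟨57600 * (r + 1), ?_⟩
  intro X hX
  obtain ⟨p, q, hpX, hqX, hpq, M, hMcard, hMprop, hMdisj⟩ := exists_segment r hr X hX
  -- markers on the segment [p,q]
  have hMt : ∀ e ∈ M, ∃ t : ℝ, 0 ≤ t ∧ t ≤ 1 ∧
      ((1 - t) • p + t • q) ∈ convexHull ℝ ({e.1, e.2} : Set (Fin 2 → ℝ)) := by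
    intro e he
    obtain ⟨v, hv1, hv2⟩ := (hMprop e he).2.2.2.2.2.2.2
    rw [mem_hull_pair_iff] at hv2
    obtain ⟨s, t, hs, ht, hst, hveq⟩ := hv2
    refine ⟨t, ht, by linarith, ?_⟩
    rw [show (1:ℝ) - t = s by linarith, ← hveq]
    exact hv1
  choose! tt ht0 ht1 htmem using hMt
  -- median selection
  obtain ⟨m, hmM, L, R, hLM, hRM, hLc, hRc, hLRdisj, hmL, hmR, hLle, hRle⟩ :=
    median tt (r - 2) M (by omega)
  set v : Fin 2 → ℝ := (1 - tt m) • p + tt m • q with hvdef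
  have hv_pq : v ∈ convexHull ℝ ({p, q} : Set (Fin 2 → ℝ)) := by
    rw [mem_hull_pair_iff]
    exact ⟨1 - tt m, tt m, by linarith [ht1 m hmM], ht0 m hmM, by ring, rfl⟩
  have hv_m : v ∈ convexHull ℝ ({m.1, m.2} : Set (Fin 2 → ℝ)) := htmem m hmM
  -- indexing the left and right families
  set la : Fin (r - 2) → (Fin 2 → ℝ) × (Fin 2 → ℝ) :=
    fun j => (L.equivFin.symm (Fin.cast hLc.symm j) : ↥L).1 with hladef
  set ra : Fin (r - 2) → (Fin 2 → ℝ) × (Fin 2 → ℝ) :=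
    fun j => (R.equivFin.symm (Fin.cast hRc.symm j) : ↥R).1 with hradef
  have hlaL : ∀ j, la j ∈ L := fun j => (L.equivFin.symm (Fin.cast hLc.symm j)).2
  have hraR : ∀ j, ra j ∈ R := fun j => (R.equivFin.symm (Fin.cast hRc.symm j)).2
  have hlaM : ∀ j, la j ∈ M := fun j => hLM (hlaL j)
  have hraM : ∀ j, ra j ∈ M := fun j => hRM (hraR j)
  have hlaInj : ∀ j j', la j = la j' → j = j' := by
    intro j j' h
    have := L.equivFin.symm.injective (Subtype.ext h)
    simpa [Fin.ext_iff] using congrArg Fin.val this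
  have hraInj : ∀ j j', ra j = ra j' → j = j' := by
    intro j j' h
    have := R.equivFin.symm.injective (Subtype.ext h)
    simpa [Fin.ext_iff] using congrArg Fin.val this
  have hlara : ∀ j j', la j ≠ ra j' := by
    intro j j' h
    exact (Finset.disjoint_left.mp hLRdisj (hlaL j)) (h ▸ hraR j')
  have hlam : ∀ j, la j ≠ m := fun j h => hmL (h ▸ hlaL j)
  have hram : ∀ j, ra j ≠ m := fun j h => hmR (h ▸ hraR j)
  -- quadrilaterals and their triples
  set quad : Fin (r - 2) → Finset (Fin 2 → ℝ) :=
    fun j => {(la j).1, (la j).2, (ra j).1, (ra j).2} with hquaddef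
  have hquadcard : ∀ j, (quad j).card = 4 := by
    intro j
    obtain ⟨hd1, hd2, hd3, hd4⟩ := hMdisj (la j) (hlaM j) (ra j) (hraM j) (hlara j j)
    have hla12 : (la j).1 ≠ (la j).2 := (hMprop _ (hlaM j)).2.2.1
    have hra12 : (ra j).1 ≠ (ra j).2 := (hMprop _ (hraM j)).2.2.1
    rw [hquaddef]
    rw [Finset.card_insert_of_notMem, Finset.card_insert_of_notMem,
      Finset.card_insert_of_notMem, Finset.card_singleton]
    · simp only [Finset.mem_singleton]; exact hra12
    · simp only [Finset.mem_insert, Finset.mem_singleton, not_or]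
      have h := hMdisj (la j) (hlaM j) (ra j) (hraM j) (hlara j j)
      exact ⟨h.2.2.1, h.2.2.2⟩
    · simp only [Finset.mem_insert, Finset.mem_singleton, not_or]
      exact ⟨hla12, hd1, hd2⟩
  have hquadX : ∀ j, (quad j : Finset (Fin 2 → ℝ)) ⊆ X := by
    intro j y hy
    rw [hquaddef] at hy
    simp only [Finset.mem_insert, Finset.mem_singleton] at hy
    rcases hy with rfl | rfl | rfl | rfl
    · exact (hMprop _ (hlaM j)).1
    · exact (hMprop _ (hlaM j)).2.1
    · exact (hMprop _ (hraM j)).1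
    · exact (hMprop _ (hraM j)).2.1
  have htripex : ∀ j : Fin (r - 2), ∃ T : Finset (Fin 2 → ℝ),
      T ⊆ quad j ∧ T.card = 3 ∧ v ∈ convexHull ℝ (T : Set (Fin 2 → ℝ)) := by
    intro j
    have hvL : (1 - tt (la j)) • p + tt (la j) • q ∈
        convexHull ℝ ({(la j).1, (la j).2} : Set (Fin 2 → ℝ)) := htmem _ (hlaM j)
    have hvR : (1 - tt (ra j)) • p + tt (ra j) • q ∈
        convexHull ℝ ({(ra j).1, (ra j).2} : Set (Fin 2 → ℝ)) := htmem _ (hraM j)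
    have hsub1 : ({(la j).1, (la j).2} : Set (Fin 2 → ℝ)) ⊆ (quad j : Set (Fin 2 → ℝ)) := by
      intro y hy
      rw [hquaddef]
      rcases hy with rfl | hy
      · simp
      · rw [Set.mem_singleton_iff] at hy
        subst hy
        simp
    have hsub2 : ({(ra j).1, (ra j).2} : Set (Fin 2 → ℝ)) ⊆ (quad j : Set (Fin 2 → ℝ)) := by
      intro y hy
      rw [hquaddef]
      rcases hy with rfl | hy
      · simp
      · rw [Set.mem_singleton_iff] at hy
        subst hy
        simp
    have hvL' : (1 - tt (la j)) • p + tt (la j) • q ∈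
        convexHull ℝ (quad j : Set (Fin 2 → ℝ)) := convexHull_mono hsub1 hvL
    have hvR' : (1 - tt (ra j)) • p + tt (ra j) • q ∈
        convexHull ℝ (quad j : Set (Fin 2 → ℝ)) := convexHull_mono hsub2 hvR
    have hτL : tt (la j) ≤ tt m := hLle _ (hlaL j)
    have hτR : tt m ≤ tt (ra j) := hRle _ (hraR j)
    have hvmid : v ∈ convexHull ℝ (quad j : Set (Fin 2 → ℝ)) := by
      by_cases hEq : tt (ra j) = tt (la j)
      · have hmm : tt m = tt (la j) := le_antisymm (hEq ▸ hτR) hτL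
        rw [hvdef, hmm]
        exact hvL'
      · have hden : 0 < tt (ra j) - tt (la j) :=
          sub_pos.mpr (lt_of_le_of_ne (hτL.trans hτR) (Ne.symm hEq))
        set θ : ℝ := (tt m - tt (la j)) / (tt (ra j) - tt (la j)) with hθdef
        have hθ0 : 0 ≤ θ := div_nonneg (by linarith) (le_of_lt hden)
        have hθ1 : θ ≤ 1 := by
          rw [hθdef, div_le_one hden]; linarith
        have hcomb : v = (1 - θ) • ((1 - tt (la j)) • p + tt (la j) • q)
            + θ • ((1 - tt (ra j)) • p + tt (ra j) • q) := by
          funext i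
          simp only [hvdef, Pi.add_apply, Pi.smul_apply, smul_eq_mul]
          have hθden : θ * (tt (ra j) - tt (la j)) = tt m - tt (la j) := by
            rw [hθdef]; field_simp
          linear_combination (p i - q i) * hθden
        rw [hcomb]
        exact (convex_convexHull ℝ (quad j : Set (Fin 2 → ℝ))) hvL' hvR'
          (by linarith) hθ0 (by ring)
    exact caratheodory3 (quad j) v hvmid (by rw [hquadcard j]; omega)
  choose Trip hTsub hTcard hTmem using htripex
  -- the final family
  set Y : Fin r → Finset (Fin 2 → ℝ) := fun i =>
    if h0 : (i : ℕ) = 0 then {p, q}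
    else if h1 : (i : ℕ) = 1 then {m.1, m.2}
    else Trip ⟨(i : ℕ) - 2, by have := i.isLt; omega⟩ with hYdef
  refine ⟨Y, ?_, ?_, ?_, ?_⟩
  · -- subsets of X
    intro i
    simp only [hYdef]
    by_cases h0 : (i : ℕ) = 0
    · rw [dif_pos h0]
      exact Finset.insert_subset hpX (Finset.singleton_subset_iff.mpr hqX)
    rw [dif_neg h0]
    by_cases h1 : (i : ℕ) = 1
    · rw [dif_pos h1]
      exact Finset.insert_subset (hMprop m hmM).1
        (Finset.singleton_subset_iff.mpr (hMprop m hmM).2.1)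
    rw [dif_neg h1]
    exact (hTsub _).trans (hquadX _)
  · -- pairwise disjointness
    have hcomp : ∀ (e f : (Fin 2 → ℝ) × (Fin 2 → ℝ)), e ∈ M → f ∈ M → e ≠ f →
        ∀ y, (y = e.1 ∨ y = e.2) → (y = f.1 ∨ y = f.2) → False := by
      intro e f he hf hef y hy1 hy2
      obtain ⟨d1, d2, d3, d4⟩ := hMdisj e he f hf hef
      rcases hy1 with rfl | rfl
      · rcases hy2 with h | h
        · exact d1 h
        · exact d2 h
      · rcases hy2 with h | h
        · exact d3 h
        · exact d4 h
    have hquadMem : ∀ j y, y ∈ quad j →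
        (y = (la j).1 ∨ y = (la j).2) ∨ (y = (ra j).1 ∨ y = (ra j).2) := by
      intro j y hy
      rw [hquaddef] at hy
      simp only [Finset.mem_insert, Finset.mem_singleton] at hy
      tauto
    have hquadpq : ∀ j y, y ∈ quad j → y ≠ p ∧ y ≠ q := by
      intro j y hy
      rcases hquadMem j y hy with (rfl | rfl) | (rfl | rfl)
      · exact ⟨(hMprop _ (hlaM j)).2.2.2.1, (hMprop _ (hlaM j)).2.2.2.2.1⟩
      · exact ⟨(hMprop _ (hlaM j)).2.2.2.2.2.1, (hMprop _ (hlaM j)).2.2.2.2.2.2.1⟩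
      · exact ⟨(hMprop _ (hraM j)).2.2.2.1, (hMprop _ (hraM j)).2.2.2.2.1⟩
      · exact ⟨(hMprop _ (hraM j)).2.2.2.2.2.1, (hMprop _ (hraM j)).2.2.2.2.2.2.1⟩
    have hAB : Disjoint ({p, q} : Finset (Fin 2 → ℝ)) {m.1, m.2} := by
      rw [Finset.disjoint_left]
      intro x hx hx'
      have h := hMprop m hmM
      simp only [Finset.mem_insert, Finset.mem_singleton] at hx hx'
      rcases hx with rfl | rfl <;> rcases hx' with h' | h'
      · exact h.2.2.2.1 h'.symm
      · exact h.2.2.2.2.2.1 h'.symm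
      · exact h.2.2.2.2.1 h'.symm
      · exact h.2.2.2.2.2.2.1 h'.symm
    have hATrip : ∀ j, Disjoint ({p, q} : Finset (Fin 2 → ℝ)) (Trip j) := by
      intro j
      rw [Finset.disjoint_left]
      intro x hx hx'
      have h := hquadpq j x (hTsub j hx')
      simp only [Finset.mem_insert, Finset.mem_singleton] at hx
      rcases hx with rfl | rfl
      · exact h.1 rfl
      · exact h.2 rfl
    have hBTrip : ∀ j, Disjoint ({m.1, m.2} : Finset (Fin 2 → ℝ)) (Trip j) := by
      intro j
      rw [Finset.disjoint_left]
      intro x hx hx'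
      have hy := hquadMem j x (hTsub j hx')
      simp only [Finset.mem_insert, Finset.mem_singleton] at hx
      rcases hy with hy | hy
      · refine hcomp (la j) m (hlaM j) hmM (hlam j) x hy ?_
        rcases hx with rfl | rfl
        · exact Or.inl rfl
        · exact Or.inr rfl
      · refine hcomp (ra j) m (hraM j) hmM (hram j) x hy ?_
        rcases hx with rfl | rfl
        · exact Or.inl rfl
        · exact Or.inr rfl
    have hTT : ∀ j j', j ≠ j' → Disjoint (Trip j) (Trip j') := by
      intro j j' hne
      rw [Finset.disjoint_left]
      intro x hx hx'
      have hy := hquadMem j x (hTsub j hx)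
      have hy' := hquadMem j' x (hTsub j' hx')
      rcases hy with hy | hy <;> rcases hy' with hy' | hy'
      · exact hcomp (la j) (la j') (hlaM j) (hlaM j')
          (fun h => hne (hlaInj _ _ h)) x hy hy'
      · exact hcomp (la j) (ra j') (hlaM j) (hraM j') (hlara j j') x hy hy'
      · exact hcomp (ra j) (la j') (hraM j) (hlaM j')
          (Ne.symm (hlara j' j)) x hy hy'
      · exact hcomp (ra j) (ra j') (hraM j) (hraM j')
          (fun h => hne (hraInj _ _ h)) x hy hy'
    intro i j hij
    simp only [hYdef]
    by_cases hi0 : (i : ℕ) = 0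
    · rw [dif_pos hi0]
      by_cases hj0 : (j : ℕ) = 0
      · exact absurd (Fin.ext (hi0.trans hj0.symm)) hij
      · rw [dif_neg hj0]
        by_cases hj1 : (j : ℕ) = 1
        · rw [dif_pos hj1]; exact hAB
        · rw [dif_neg hj1]; exact hATrip _
    · rw [dif_neg hi0]
      by_cases hi1 : (i : ℕ) = 1
      · rw [dif_pos hi1]
        by_cases hj0 : (j : ℕ) = 0
        · rw [dif_pos hj0]; exact hAB.symm
        · rw [dif_neg hj0]
          by_cases hj1 : (j : ℕ) = 1
          · exact absurd (Fin.ext (hi1.trans hj1.symm)) hij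
          · rw [dif_neg hj1]; exact hBTrip _
      · rw [dif_neg hi1]
        by_cases hj0 : (j : ℕ) = 0
        · rw [dif_pos hj0]; exact (hATrip _).symm
        · rw [dif_neg hj0]
          by_cases hj1 : (j : ℕ) = 1
          · rw [dif_pos hj1]; exact (hBTrip _).symm
          · rw [dif_neg hj1]
            apply hTT
            intro h
            apply hij
            apply Fin.ext
            have := congrArg Fin.val h
            simp only at this
            omega
  · -- cardinalities
    intro i
    simp only [hYdef]
    by_cases h0 : (i : ℕ) = 0
    · rw [dif_pos h0, if_pos (by omega : (i : ℕ) < 2)]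
      rw [Finset.card_insert_of_notMem (by simpa using hpq), Finset.card_singleton]
    rw [dif_neg h0]
    by_cases h1 : (i : ℕ) = 1
    · rw [dif_pos h1, if_pos (by omega : (i : ℕ) < 2)]
      rw [Finset.card_insert_of_notMem (by simpa using (hMprop m hmM).2.2.1),
        Finset.card_singleton]
    rw [dif_neg h1, if_neg (by omega : ¬ (i : ℕ) < 2)]
    exact hTcard _
  · -- common point
    refine ⟨v, Set.mem_iInter.mpr ?_⟩
    intro i
    simp only [hYdef]
    by_cases h0 : (i : ℕ) = 0
    · rw [dif_pos h0]
      simpa using hv_pq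
    rw [dif_neg h0]
    by_cases h1 : (i : ℕ) = 1
    · rw [dif_pos h1]
      simpa using hv_m
    rw [dif_neg h1]
    exact hTmem _
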